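/- Let b and c be real numbers. (i) If 0 < c < b, then there exist constants 0 < k₁ ≤ k₂, depending only on b and c, such that for every a > 0: k₁·min(a^b, a^c) ≤ ∫₀¹ min((aε)^b, 1)·ε^{−1−c} dε ≤ k₂·min(a^b, a^c). (ii) If 0 < b ≤ c, then ∫₀¹ min((aε)^b, 1)·ε^{−1−c} dε = ∞ for every a > 0. -/

import Mathlib

open MeasureTheory Set

private lemma lint_rpow_Ioc_zero {p δ : ℝ} (hp : -1 < p) (hδ : 0 < δ) :
    ∫⁻ x in Ioc (0 : ℝ) δ, ENNReal.ofReal (x ^ p) =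
      ENNReal.ofReal (δ ^ (p + 1) / (p + 1)) := by
  have hint : IntegrableOn (fun x : ℝ => x ^ p) (Ioc 0 δ) := by
    rw [← intervalIntegrable_iff_integrableOn_Ioc_of_le hδ.le]
    exact intervalIntegral.intervalIntegrable_rpow' hp
  rw [← ofReal_integral_eq_lintegral_ofReal hint]
  · congr 1
    rw [← intervalIntegral.integral_of_le hδ.le, integral_rpow (Or.inl hp),
      Real.zero_rpow (by linarith), sub_zero]
  · filter_upwards [ae_restrict_mem measurableSet_Ioc] with x hx
    exact Real.rpow_nonneg hx.1.le p

private lemma lint_rpow_Ioc_one {p t : ℝ} (hp : p ≠ -1) (ht : 0 < t) (ht1 : t ≤ 1) :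
    ∫⁻ x in Ioc t 1, ENNReal.ofReal (x ^ p) =
      ENNReal.ofReal ((1 - t ^ (p + 1)) / (p + 1)) := by
  have h0 : (0 : ℝ) ∉ uIcc t 1 := by
    rw [uIcc_of_le ht1]; exact fun h => absurd h.1 (not_le.2 ht)
  have hint : IntegrableOn (fun x : ℝ => x ^ p) (Ioc t 1) := by
    rw [← intervalIntegrable_iff_integrableOn_Ioc_of_le ht1]
    exact intervalIntegral.intervalIntegrable_rpow (Or.inr h0)
  rw [← ofReal_integral_eq_lintegral_ofReal hint]
  · congr 1
    rw [← intervalIntegral.integral_of_le ht1, integral_rpow (Or.inr ⟨hp, h0⟩),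
      Real.one_rpow]
  · filter_upwards [ae_restrict_mem measurableSet_Ioc] with x hx
    exact Real.rpow_nonneg (ht.trans hx.1).le p

private lemma lint_rpow_Ioc_top {p δ : ℝ} (hp : p ≤ -1) (hδ : 0 < δ) :
    ∫⁻ x in Ioc (0 : ℝ) δ, ENNReal.ofReal (x ^ p) = ⊤ := by
  by_contra h
  have hmeas : AEStronglyMeasurable (fun x : ℝ => x ^ p)
      (volume.restrict (Ioc (0 : ℝ) δ)) := by fun_prop
  have hnn : 0 ≤ᶠ[ae (volume.restrict (Ioc (0 : ℝ) δ))] fun x : ℝ => x ^ p := by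
    filter_upwards [ae_restrict_mem measurableSet_Ioc] with x hx
    exact Real.rpow_nonneg hx.1.le p
  have hint : IntegrableOn (fun x : ℝ => x ^ p) (Ioc 0 δ) :=
    (lintegral_ofReal_ne_top_iff_integrable hmeas hnn).1 h
  have : IntegrableOn (fun x : ℝ => x ^ p) (Ioo 0 δ) :=
    hint.mono_set Ioo_subset_Ioc_self
  rw [intervalIntegral.integrableOn_Ioo_rpow_iff hδ] at this
  linarith

/-- Lemma A.1: for `0 < c < b`, `∫₀¹ min((aε)^b, 1) ε^{-1-c} dε ≍ min(a^b, a^c)`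
uniformly in `a > 0`; and the integral is infinite when `0 < b ≤ c`. -/
theorem stmt_0 (b c : ℝ) :
    ((0 < c ∧ c < b) →
      ∃ k₁ k₂ : ℝ, 0 < k₁ ∧ k₁ ≤ k₂ ∧ ∀ a : ℝ, 0 < a →
        ENNReal.ofReal (k₁ * min (a ^ b) (a ^ c)) ≤
            (∫⁻ ε in Ioc (0 : ℝ) 1,
              ENNReal.ofReal (min ((a * ε) ^ b) 1 * ε ^ (-1 - c))) ∧
          (∫⁻ ε in Ioc (0 : ℝ) 1,
              ENNReal.ofReal (min ((a * ε) ^ b) 1 * ε ^ (-1 - c))) ≤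
            ENNReal.ofReal (k₂ * min (a ^ b) (a ^ c))) ∧
    ((0 < b ∧ b ≤ c) → ∀ a : ℝ, 0 < a →
      (∫⁻ ε in Ioc (0 : ℝ) 1,
        ENNReal.ofReal (min ((a * ε) ^ b) 1 * ε ^ (-1 - c))) = ⊤) := by
  have key_small : ∀ a δ : ℝ, 0 < a → 0 < b → 0 < δ → a * δ ≤ 1 →
      (∫⁻ ε in Ioc (0 : ℝ) δ,
        ENNReal.ofReal (min ((a * ε) ^ b) 1 * ε ^ (-1 - c))) =
      ENNReal.ofReal (a ^ b) * ∫⁻ ε in Ioc (0 : ℝ) δ,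
        ENNReal.ofReal (ε ^ (b - 1 - c)) := by
    intro a δ ha hb hδ haδ
    rw [← lintegral_const_mul' _ _ ENNReal.ofReal_ne_top]
    apply setLIntegral_congr_fun measurableSet_Ioc
    intro ε hε
    dsimp only
    have hε0 : 0 < ε := hε.1
    have haε : a * ε ≤ 1 :=
      le_trans (mul_le_mul_of_nonneg_left hε.2 ha.le) haδ
    have hmin : min ((a * ε) ^ b) 1 = (a * ε) ^ b :=
      min_eq_left (Real.rpow_le_one (by positivity) haε hb.le)
    have heq : min ((a * ε) ^ b) 1 * ε ^ (-1 - c) = a ^ b * ε ^ (b - 1 - c) := by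
      rw [hmin, Real.mul_rpow ha.le hε0.le, mul_assoc, ← Real.rpow_add hε0,
        show b + (-1 - c) = b - 1 - c by ring]
    rw [heq, ENNReal.ofReal_mul (by positivity)]
  constructor
  · rintro ⟨hc, hcb⟩
    have hb : 0 < b := hc.trans hcb
    have hbc : 0 < b - c := by linarith
    refine ⟨1 / (b - c), 1 / (b - c) + 1 / c, one_div_pos.2 hbc, le_add_of_nonneg_right (one_div_pos.2 hc).le, fun a ha => ?_⟩
    rcases le_or_gt a 1 with ha1 | ha1
    · -- a ≤ 1 : integral = a^b/(b-c), min = a^b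
      have hmin : min (a ^ b) (a ^ c) = a ^ b :=
        min_eq_left (Real.rpow_le_rpow_of_exponent_ge ha ha1 hcb.le)
      have hI : (∫⁻ ε in Ioc (0 : ℝ) 1,
          ENNReal.ofReal (min ((a * ε) ^ b) 1 * ε ^ (-1 - c))) =
          ENNReal.ofReal (1 / (b - c) * a ^ b) := by
        rw [key_small a 1 ha hb one_pos (by simpa using ha1),
          lint_rpow_Ioc_zero (by linarith : (-1:ℝ) < b - 1 - c) one_pos,
          Real.one_rpow, ← ENNReal.ofReal_mul (by positivity)]
        congr 1
        have : b - 1 - c + 1 = b - c := by ring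
        rw [this]
        ring
      rw [hI, hmin]
      refine ⟨le_rfl, ENNReal.ofReal_le_ofReal ?_⟩
      have hanb : (0:ℝ) ≤ a ^ b := by positivity
      have h1c : (0:ℝ) ≤ 1 / c := by positivity
      nlinarith
    · -- a > 1 : split at 1/a
      have hmin : min (a ^ b) (a ^ c) = a ^ c :=
        min_eq_right (Real.rpow_le_rpow_of_exponent_le ha1.le hcb.le)
      have hia : (0:ℝ) < 1 / a := by positivity
      have hia1 : 1 / a ≤ 1 := by rw [div_le_one ha]; exact ha1.le
      have hsplit : Ioc (0:ℝ) 1 = Ioc 0 (1/a) ∪ Ioc (1/a) 1 :=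
        (Ioc_union_Ioc_eq_Ioc hia.le hia1).symm
      have hpow : (1/a:ℝ) ^ (b - c) = a ^ (c - b) := by
        rw [one_div, ← Real.rpow_neg_one, ← Real.rpow_mul ha.le]
        congr 1; ring
      have hac1 : (1:ℝ) ≤ a ^ c := Real.one_le_rpow ha1.le hc.le
      have h1 : (∫⁻ ε in Ioc (0 : ℝ) (1/a),
          ENNReal.ofReal (min ((a * ε) ^ b) 1 * ε ^ (-1 - c))) =
          ENNReal.ofReal (a ^ c / (b - c)) := by
        rw [key_small a (1/a) ha hb hia (by rw [mul_one_div, div_self ha.ne']),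
          lint_rpow_Ioc_zero (by linarith : (-1:ℝ) < b - 1 - c) hia,
          ← ENNReal.ofReal_mul (by positivity)]
        congr 1
        rw [show b - 1 - c + 1 = b - c by ring, hpow, mul_div_assoc',
          ← Real.rpow_add ha, show b + (c - b) = c by ring]
      have h2 : (∫⁻ ε in Ioc (1/a) (1 : ℝ),
          ENNReal.ofReal (min ((a * ε) ^ b) 1 * ε ^ (-1 - c))) =
          ENNReal.ofReal ((a ^ c - 1) / c) := by
        have heq : (∫⁻ ε in Ioc (1/a) (1 : ℝ),
            ENNReal.ofReal (min ((a * ε) ^ b) 1 * ε ^ (-1 - c))) =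
            ∫⁻ ε in Ioc (1/a) (1 : ℝ), ENNReal.ofReal (ε ^ (-1 - c)) := by
          apply setLIntegral_congr_fun measurableSet_Ioc
          intro ε hε
          dsimp only
          have haε : 1 ≤ a * ε := by
            rw [← div_le_iff₀' ha]; exact hε.1.le
          rw [min_eq_right (Real.one_le_rpow haε hb.le), one_mul]
        rw [heq, lint_rpow_Ioc_one (by linarith : (-1 - c : ℝ) ≠ -1) hia hia1]
        congr 1
        have hpow2 : (1/a:ℝ) ^ (-c) = a ^ c := by
          rw [one_div, ← Real.rpow_neg_one, ← Real.rpow_mul ha.le]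
          congr 1; ring
        rw [show (-1 - c + 1 : ℝ) = -c by ring, hpow2,
          show (1 : ℝ) - a ^ c = -(a ^ c - 1) by ring, neg_div, div_neg, neg_neg]
      rw [hsplit, lintegral_union measurableSet_Ioc (Ioc_disjoint_Ioc_of_le le_rfl), h1, h2, hmin]
      constructor
      · have he : 1 / (b - c) * a ^ c = a ^ c / (b - c) := by ring
        rw [he]
        exact le_self_add
      · rw [← ENNReal.ofReal_add (by positivity)
          (div_nonneg (by linarith) hc.le)]
        apply ENNReal.ofReal_le_ofReal
        have h3 : (a ^ c - 1) / c ≤ a ^ c / c := by gcongr; linarith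
        have h4 : (1 / (b - c) + 1 / c) * a ^ c = a ^ c / (b - c) + a ^ c / c := by
          ring
        rw [h4]
        linarith
  · rintro ⟨hb, hbc⟩ a ha
    set δ := min 1 (1/a) with hδdef
    have hδ : 0 < δ := lt_min one_pos (by positivity)
    have hδ1 : δ ≤ 1 := min_le_left _ _
    have haδ : a * δ ≤ 1 := by
      calc a * δ ≤ a * (1/a) := by
            apply mul_le_mul_of_nonneg_left (min_le_right _ _) ha.le
        _ = 1 := by field_simp
    rw [eq_top_iff]
    calc (⊤ : ENNReal) = ENNReal.ofReal (a ^ b) * ∫⁻ ε in Ioc (0 : ℝ) δ,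
            ENNReal.ofReal (ε ^ (b - 1 - c)) := by
          rw [lint_rpow_Ioc_top (by linarith : b - 1 - c ≤ -1) hδ, ENNReal.mul_top]
          simp only [ne_eq, ENNReal.ofReal_eq_zero, not_le]
          positivity
      _ = ∫⁻ ε in Ioc (0 : ℝ) δ,
            ENNReal.ofReal (min ((a * ε) ^ b) 1 * ε ^ (-1 - c)) :=
          (key_small a δ ha hb hδ haδ).symm
      _ ≤ _ := lintegral_mono_set (Ioc_subset_Ioc le_rfl hδ1)
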